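/- Let A, E ∈ ℂ^{n×n}, B ∈ ℂ^{n×1}, C ∈ ℂ^{1×n}, let ω_1, …, ω_N ∈ ℝ, φ_1, …, φ_N ∈ ℝ, and η_1, …, η_r ∈ ℂ be such that each iω_i E − A and each η_j E − A is invertible and iω_i ≠ η_j for all i, j. Let L̃* ∈ ℂ^{N×n} have k-th row φ_k C (iω_k E − A)^{-1}, let V_r ∈ ℂ^{n×r} have j-th column (η_j E − A)^{-1} B, and set W̃_r = (L̃*)^* L̃* E V_r. Define the reduced matrices Ã_r = W̃_r^* A V_r, Ẽ_r = W̃_r^* E V_r, B̃_r = W̃_r^* B, C̃_r = C V_r. Define scalars ℓ_{i,j} = −φ_i (H(iω_i) − H(η_j))/(iω_i − η_j) and m_{i,j} = −φ_i (iω_i H(iω_i) − η_j H(η_j))/(iω_i − η_j). Then for all 1 ≤ p, q ≤ r: (Ã_r)_{p,q} = Σ_{i=1}^{N} conj(ℓ_{i,p}) m_{i,q}, (Ẽ_r)_{p,q} = Σ_{i=1}^{N} conj(ℓ_{i,p}) ℓ_{i,q}, (B̃_r)_p = Σ_{i=1}^{N} conj(ℓ_{i,p}) φ_i H(iω_i),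 and (C̃_r)_q = H(η_q); in particular every reduced matrix is determined solely by the transfer-function values H(iω_i), H(η_j) together with the nodes, shifts, and weights. -/

import Mathlib

open Matrix

lemma rowMul {n N m : ℕ} (L : Matrix (Fin N) (Fin n) ℂ) (i : Fin N) (c : ℂ)
    (u : Matrix (Fin 1) (Fin n) ℂ) (h : ∀ x, L i x = c * u 0 x)
    (M : Matrix (Fin n) (Fin m) ℂ) (j : Fin m) :
    (L * M) i j = c * (u * M) 0 j := by
  simp [Matrix.mul_apply, h, Finset.mul_sum, mul_assoc]

lemma mulCol {n r : ℕ} (u : Matrix (Fin 1) (Fin n) ℂ) (V : Matrix (Fin n) (Fin r) ℂ)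
    (j : Fin r) (w : Matrix (Fin n) (Fin 1) ℂ) (h : ∀ x, V x j = w x 0) :
    (u * V) 0 j = (u * w) 0 0 := by
  simp [Matrix.mul_apply, h]

lemma resE {n : ℕ} (E A : Matrix (Fin n) (Fin n) ℂ) (s1 s2 : ℂ)
    (h1 : IsUnit (s1 • E - A).det) (h2 : IsUnit (s2 • E - A).det) (hne : s1 ≠ s2) :
    (s1 • E - A)⁻¹ * E * (s2 • E - A)⁻¹
      = (s2 - s1)⁻¹ • ((s1 • E - A)⁻¹ - (s2 • E - A)⁻¹) := by
  have hd : (s2 - s1) ≠ 0 := sub_ne_zero.mpr (Ne.symm hne)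
  have hEeq : (s2 - s1) • E = (s2 • E - A) - (s1 • E - A) := by
    rw [sub_smul]; abel
  have key : (s1 • E - A)⁻¹ * ((s2 - s1) • E) * (s2 • E - A)⁻¹
      = (s1 • E - A)⁻¹ - (s2 • E - A)⁻¹ := by
    rw [hEeq, Matrix.mul_sub, Matrix.sub_mul, Matrix.mul_assoc,
      Matrix.mul_nonsing_inv _ h2, Matrix.nonsing_inv_mul _ h1,
      Matrix.mul_one, Matrix.one_mul]
  calc (s1 • E - A)⁻¹ * E * (s2 • E - A)⁻¹
      = (s2 - s1)⁻¹ • ((s1 • E - A)⁻¹ * ((s2 - s1) • E) * (s2 • E - A)⁻¹) := by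
        rw [Matrix.mul_smul, Matrix.smul_mul, smul_smul, inv_mul_cancel₀ hd, one_smul]
    _ = (s2 - s1)⁻¹ • ((s1 • E - A)⁻¹ - (s2 • E - A)⁻¹) := by rw [key]

lemma resA {n : ℕ} (E A : Matrix (Fin n) (Fin n) ℂ) (s1 s2 : ℂ)
    (h1 : IsUnit (s1 • E - A).det) (h2 : IsUnit (s2 • E - A).det) (hne : s1 ≠ s2) :
    (s1 • E - A)⁻¹ * A * (s2 • E - A)⁻¹
      = (s2 - s1)⁻¹ • (s1 • (s1 • E - A)⁻¹ - s2 • (s2 • E - A)⁻¹) := by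
  have hd : (s2 - s1) ≠ 0 := sub_ne_zero.mpr (Ne.symm hne)
  have hAeq : (s2 - s1) • A = s1 • (s2 • E - A) - s2 • (s1 • E - A) := by
    rw [smul_sub, smul_sub, sub_smul, smul_smul, smul_smul, mul_comm s2 s1]
    abel
  have key : (s1 • E - A)⁻¹ * ((s2 - s1) • A) * (s2 • E - A)⁻¹
      = s1 • (s1 • E - A)⁻¹ - s2 • (s2 • E - A)⁻¹ := by
    rw [hAeq, Matrix.mul_sub, Matrix.sub_mul, Matrix.mul_smul, Matrix.mul_smul,
      Matrix.smul_mul, Matrix.smul_mul, Matrix.mul_assoc,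
      Matrix.mul_nonsing_inv _ h2, Matrix.nonsing_inv_mul _ h1,
      Matrix.mul_one, Matrix.one_mul]
  calc (s1 • E - A)⁻¹ * A * (s2 • E - A)⁻¹
      = (s2 - s1)⁻¹ • ((s1 • E - A)⁻¹ * ((s2 - s1) • A) * (s2 • E - A)⁻¹) := by
        rw [Matrix.mul_smul, Matrix.smul_mul, smul_smul, inv_mul_cancel₀ hd, one_smul]
    _ = (s2 - s1)⁻¹ • (s1 • (s1 • E - A)⁻¹ - s2 • (s2 • E - A)⁻¹) := by rw [key]

/-- Every entry of the quadrature-ISRK reduced matrices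
`Ã_r = W̃_r^* A V_r`, `Ẽ_r = W̃_r^* E V_r`, `B̃_r = W̃_r^* B`, `C̃_r = C V_r`
(with `W̃_r = (L̃*)^* L̃* E V_r`) is expressed solely through the scalar data
`ℓ_{i,j} = −φ_i (H(iω_i) − H(η_j))/(iω_i − η_j)` and
`m_{i,j} = −φ_i (iω_i H(iω_i) − η_j H(η_j))/(iω_i − η_j)` together with the
transfer-function samples. -/
theorem stmt6 (n N r : ℕ)
    (A E : Matrix (Fin n) (Fin n) ℂ) (B : Matrix (Fin n) (Fin 1) ℂ)
    (C : Matrix (Fin 1) (Fin n) ℂ)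
    (ω φ : Fin N → ℝ) (η : Fin r → ℂ)
    (hω : ∀ i, IsUnit ((Complex.I * (ω i : ℂ)) • E - A).det)
    (hη : ∀ j, IsUnit (η j • E - A).det)
    (hne : ∀ i j, Complex.I * (ω i : ℂ) ≠ η j)
    (H : ℂ → ℂ) (hH : ∀ s, H s = (C * (s • E - A)⁻¹ * B) 0 0)
    (Lstar : Matrix (Fin N) (Fin n) ℂ)
    (hLstar : ∀ (k : Fin N) (x : Fin n), Lstar k x =
      (φ k : ℂ) * (C * ((Complex.I * (ω k : ℂ)) • E - A)⁻¹) 0 x)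
    (V : Matrix (Fin n) (Fin r) ℂ)
    (hV : ∀ (x : Fin n) (j : Fin r), V x j = ((η j • E - A)⁻¹ * B) x 0)
    (W : Matrix (Fin n) (Fin r) ℂ) (hW : W = Lstarᴴ * Lstar * E * V)
    (Ar Er : Matrix (Fin r) (Fin r) ℂ)
    (Br : Matrix (Fin r) (Fin 1) ℂ) (Cr : Matrix (Fin 1) (Fin r) ℂ)
    (hAr : Ar = Wᴴ * A * V) (hEr : Er = Wᴴ * E * V)
    (hBr : Br = Wᴴ * B) (hCr : Cr = C * V)
    (ℓ m : Fin N → Fin r → ℂ)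
    (hℓ : ∀ i j, ℓ i j =
      -(φ i : ℂ) * ((H (Complex.I * (ω i : ℂ)) - H (η j)) / (Complex.I * (ω i : ℂ) - η j)))
    (hm : ∀ i j, m i j =
      -(φ i : ℂ) * ((Complex.I * (ω i : ℂ) * H (Complex.I * (ω i : ℂ)) - η j * H (η j)) /
        (Complex.I * (ω i : ℂ) - η j))) :
    ∀ p q : Fin r,
      Ar p q = ∑ i : Fin N, starRingEnd ℂ (ℓ i p) * m i q ∧
      Er p q = ∑ i : Fin N, starRingEnd ℂ (ℓ i p) * ℓ i q ∧
      Br p 0 = ∑ i : Fin N, starRingEnd ℂ (ℓ i p) * ((φ i : ℂ) * H (Complex.I * (ω i : ℂ))) ∧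
      Cr 0 q = H (η q) := by

  intro p q
  set s : Fin N → ℂ := fun i => Complex.I * (ω i : ℂ) with hs
  have hHs : ∀ t : ℂ, (C * (t • E - A)⁻¹ * B) 0 0 = H t := fun t => (hH t).symm
  -- scalar value of ℓ and m via matrix products
  have hsne : ∀ i j, s i - η j ≠ 0 := fun i j => sub_ne_zero.mpr (hne i j)
  have hLEV : ∀ i j, (Lstar * (E * V)) i j = ℓ i j := by
    intro i j
    rw [rowMul Lstar i (φ i : ℂ) (C * (s i • E - A)⁻¹) (hLstar i) (E * V) j,
      ← Matrix.mul_assoc,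
      mulCol _ V j ((η j • E - A)⁻¹ * B) (fun x => hV x j)]
    have hX : C * (s i • E - A)⁻¹ * E * ((η j • E - A)⁻¹ * B)
        = C * ((s i • E - A)⁻¹ * E * (η j • E - A)⁻¹) * B := by
      simp only [Matrix.mul_assoc]
    rw [hX, resE E A (s i) (η j) (hω i) (hη j) (hne i j)]
    simp only [Matrix.mul_smul, Matrix.smul_mul, Matrix.mul_sub, Matrix.sub_mul,
      Matrix.smul_apply, Matrix.sub_apply, smul_eq_mul, hHs, hℓ i j]
    have hd := hsne i j
    have hd2 : -(Complex.I * (ω i : ℂ)) + η j ≠ 0 := by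
      intro h; exact hsne i j (by simp only [hs]; linear_combination -h)
    have hinv : (-(Complex.I * (ω i : ℂ)) + η j) * (-(Complex.I * (ω i : ℂ)) + η j)⁻¹ = 1 :=
      mul_inv_cancel₀ hd2
    have hd3 : η j - Complex.I * (ω i : ℂ) ≠ 0 := fun h => hd2 (by linear_combination h)
    simp only [hs] at hd ⊢
    field_simp
    ring
  have hLAV : ∀ i j, (Lstar * (A * V)) i j = m i j := by
    intro i j
    rw [rowMul Lstar i (φ i : ℂ) (C * (s i • E - A)⁻¹) (hLstar i) (A * V) j,
      ← Matrix.mul_assoc,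
      mulCol _ V j ((η j • E - A)⁻¹ * B) (fun x => hV x j)]
    have hX : C * (s i • E - A)⁻¹ * A * ((η j • E - A)⁻¹ * B)
        = C * ((s i • E - A)⁻¹ * A * (η j • E - A)⁻¹) * B := by
      simp only [Matrix.mul_assoc]
    rw [hX, resA E A (s i) (η j) (hω i) (hη j) (hne i j)]
    simp only [Matrix.mul_smul, Matrix.smul_mul, Matrix.mul_sub, Matrix.sub_mul,
      Matrix.smul_apply, Matrix.sub_apply, smul_eq_mul, hHs, hm i j]
    have hd := hsne i j
    have hd2 : -(Complex.I * (ω i : ℂ)) + η j ≠ 0 := by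
      intro h; exact hsne i j (by simp only [hs]; linear_combination -h)
    have hinv : (-(Complex.I * (ω i : ℂ)) + η j) * (-(Complex.I * (ω i : ℂ)) + η j)⁻¹ = 1 :=
      mul_inv_cancel₀ hd2
    have hd3 : η j - Complex.I * (ω i : ℂ) ≠ 0 := fun h => hd2 (by linear_combination h)
    simp only [hs] at hd ⊢
    field_simp
    ring
  have hLB : ∀ i : Fin N, (Lstar * B) i 0 = (φ i : ℂ) * H (s i) := by
    intro i
    rw [rowMul Lstar i (φ i : ℂ) (C * (s i • E - A)⁻¹) (hLstar i) B 0,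
      Matrix.mul_assoc, ← Matrix.mul_assoc, hHs]
  have hCV : (C * V) 0 q = H (η q) := by
    rw [mulCol C V q ((η q • E - A)⁻¹ * B) (fun x => hV x q), ← Matrix.mul_assoc, hHs]
  have hWH : ∀ M : Matrix (Fin n) (Fin 1) ℂ, Wᴴ * M = (Lstar * (E * V))ᴴ * (Lstar * M) := by
    intro M
    rw [hW]
    simp only [Matrix.conjTranspose_mul, Matrix.conjTranspose_conjTranspose, Matrix.mul_assoc]
  have hWH2 : ∀ M : Matrix (Fin n) (Fin r) ℂ, Wᴴ * M = (Lstar * (E * V))ᴴ * (Lstar * M) := by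
    intro M
    rw [hW]
    simp only [Matrix.conjTranspose_mul, Matrix.conjTranspose_conjTranspose, Matrix.mul_assoc]
  refine ⟨?_, ?_, ?_, ?_⟩
  · rw [hAr, Matrix.mul_assoc, hWH2, Matrix.mul_apply]
    exact Finset.sum_congr rfl fun i _ => by
      simp only [Matrix.conjTranspose_apply, hLEV i p, hLAV i q, starRingEnd_apply]
  · rw [hEr, Matrix.mul_assoc, hWH2, Matrix.mul_apply]
    exact Finset.sum_congr rfl fun i _ => by
      simp only [Matrix.conjTranspose_apply, hLEV i p, hLEV i q, starRingEnd_apply]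
  · rw [hBr, hWH, Matrix.mul_apply]
    exact Finset.sum_congr rfl fun i _ => by
      simp only [Matrix.conjTranspose_apply, hLEV i p, hLB i, starRingEnd_apply, hs]
  · rw [hCr, hCV]
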